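/- Let Φ be an m×n real matrix satisfying the restricted isometry property of order |S|+|Λ| with constant δ, where S and Λ are disjoint subsets of {1,…,n}. If y = Φ_Λ x_Λ for some vector x supported on Λ, then the orthogonal projection P_S of y onto the column span of Φ_S satisfies ‖P_S y‖₂ ≤ δ ‖y‖₂. -/
import Mathlib


open Matrix

lemma core_ineq (δ W e f : ℝ) (hδ0 : 0 ≤ δ) (hδ1 : δ ≤ 1) (hW : 0 ≤ W)
    (he : -(δ*W) ≤ e) (hf : -(δ*W) ≤ f) (hs : e + f ≤ 0) :
    (δ*W+e)*(δ*W+f) ≤ δ^2*(W+e)*(W+f) := by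
  rcases le_or_gt e 0 with he0 | he0
  · rcases le_or_gt f 0 with hf0 | hf0
    · nlinarith [mul_nonneg (show (0:ℝ) ≤ δ*W+f by linarith) (show (0:ℝ) ≤ -e by linarith),
        mul_nonneg (mul_nonneg hδ0 (show (0:ℝ) ≤ δ*W+e by linarith)) (show (0:ℝ) ≤ -f by linarith),
        mul_nonneg (mul_nonneg (mul_nonneg hδ0 (show (0:ℝ) ≤ 1-δ by linarith)) hW) (show (0:ℝ) ≤ -f by linarith)]
    · nlinarith [mul_nonneg (show (0:ℝ) ≤ 1-δ by linarith)
          (mul_nonneg (mul_nonneg hδ0 hW) (show (0:ℝ) ≤ -(e+f) by linarith)),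
        mul_nonneg (show (0:ℝ) ≤ (1-δ)*(1+δ) by nlinarith)
          (show (0:ℝ) ≤ -(e*f) from neg_nonneg.mpr (mul_nonpos_of_nonpos_of_nonneg he0 (le_of_lt hf0)))]
  · nlinarith [mul_nonneg (show (0:ℝ) ≤ 1-δ by linarith)
        (mul_nonneg (mul_nonneg hδ0 hW) (show (0:ℝ) ≤ -(e+f) by linarith)),
      mul_nonneg (show (0:ℝ) ≤ (1-δ)*(1+δ) by nlinarith)
        (show (0:ℝ) ≤ -(e*f) from neg_nonneg.mpr (mul_nonpos_of_nonneg_of_nonpos (le_of_lt he0) (show f ≤ 0 by linarith)))]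

lemma core_ineq2 (δ W e f : ℝ) (hδ0 : 0 ≤ δ) (hδ1 : δ ≤ 1) (hW : 0 ≤ W)
    (he : e ≤ δ*W) (hf : f ≤ δ*W) (hs : 0 ≤ e + f) :
    (δ*W-e)*(δ*W-f) ≤ δ^2*(W+e)*(W+f) := by
  rcases le_or_gt e 0 with he0 | he0
  · nlinarith [mul_nonneg (show (0:ℝ) ≤ 1-δ by linarith)
        (mul_nonneg (mul_nonneg hδ0 hW) hs),
      mul_nonneg (show (0:ℝ) ≤ (1-δ)*(1+δ) by nlinarith)
        (show (0:ℝ) ≤ -(e*f) from neg_nonneg.mpr (mul_nonpos_of_nonpos_of_nonneg he0 (by linarith)))]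
  · rcases le_or_gt f 0 with hf0 | hf0
    · nlinarith [mul_nonneg (show (0:ℝ) ≤ 1-δ by linarith)
          (mul_nonneg (mul_nonneg hδ0 hW) hs),
        mul_nonneg (show (0:ℝ) ≤ (1-δ)*(1+δ) by nlinarith)
          (show (0:ℝ) ≤ -(e*f) from neg_nonneg.mpr (mul_nonpos_of_nonneg_of_nonpos he0.le hf0))]
    · nlinarith [mul_nonneg (show (0:ℝ) ≤ δ*W-e by linarith) hf0.le,
        mul_nonneg (mul_nonneg hδ0 he0.le) hf0.le,
        mul_nonneg (mul_nonneg (mul_nonneg hδ0 hW) he0.le) (show (0:ℝ) ≤ 1 by norm_num),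
        mul_nonneg (mul_nonneg hδ0 hW) he0.le]

lemma key_ineq (δ U X P Q b : ℝ) (hδ0 : 0 ≤ δ) (hδ1 : δ < 1) (hU : 0 ≤ U) (hX : 0 ≤ X)
    (h1 : b^2 ≤ (P-(1-δ)*U)*(Q-(1-δ)*X)) (h2 : b^2 ≤ ((1+δ)*U-P)*((1+δ)*X-Q))
    (hP1 : (1-δ)*U ≤ P) (hP2 : P ≤ (1+δ)*U) (hQ1 : (1-δ)*X ≤ Q) (hQ2 : Q ≤ (1+δ)*X) :
    b^2 ≤ δ^2*(P*Q) := by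
  rcases eq_or_lt_of_le hU with hU0 | hU0
  · have hU' : U = 0 := hU0.symm
    have hP0 : P = 0 := by rw [hU'] at hP1 hP2; nlinarith
    rw [hP0, hU'] at h1
    rw [hP0]
    have hb : b^2 ≤ 0 := by nlinarith [h1]
    nlinarith [hb]
  rcases eq_or_lt_of_le hX with hX0 | hX0
  · have hX' : X = 0 := hX0.symm
    have hQ0 : Q = 0 := by rw [hX'] at hQ1 hQ2; nlinarith
    rw [hQ0, hX'] at h1
    rw [hQ0]
    have hb : b^2 ≤ 0 := by nlinarith [h1]
    nlinarith [hb]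
  set W := U*X with hWdef
  have hW : 0 < W := mul_pos hU0 hX0
  set e := (P-U)*X with hedef
  set f := (Q-X)*U with hfdef
  have hee : -(δ*W) ≤ e := by rw [hedef, hWdef]; nlinarith
  have hee' : e ≤ δ*W := by rw [hedef, hWdef]; nlinarith
  have hff : -(δ*W) ≤ f := by rw [hfdef, hWdef]; nlinarith
  have hff' : f ≤ δ*W := by rw [hfdef, hWdef]; nlinarith
  have hfin : b^2 * W ≤ δ^2*(P*Q) * W := by
    rcases le_or_gt (e+f) 0 with hs | hs
    · have hcore := core_ineq δ W e f hδ0 hδ1.le hW.le hee hff hs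
      have h1' : b^2 * W ≤ ((P-(1-δ)*U)*(Q-(1-δ)*X)) * W :=
        mul_le_mul_of_nonneg_right h1 hW.le
      have hid1 : ((P-(1-δ)*U)*(Q-(1-δ)*X)) * W = (δ*W+e)*(δ*W+f) := by
        rw [hedef, hfdef, hWdef]; ring
      have hid2 : δ^2*(W+e)*(W+f) = δ^2*(P*Q)*W := by
        rw [hedef, hfdef, hWdef]; ring
      calc b^2 * W ≤ (δ*W+e)*(δ*W+f) := by rw [← hid1]; exact h1'
        _ ≤ δ^2*(W+e)*(W+f) := hcore
        _ = δ^2*(P*Q)*W := hid2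
    · have hcore := core_ineq2 δ W e f hδ0 hδ1.le hW.le hee' hff' hs.le
      have h2' : b^2 * W ≤ (((1+δ)*U-P)*((1+δ)*X-Q)) * W :=
        mul_le_mul_of_nonneg_right h2 hW.le
      have hid1 : (((1+δ)*U-P)*((1+δ)*X-Q)) * W = (δ*W-e)*(δ*W-f) := by
        rw [hedef, hfdef, hWdef]; ring
      have hid2 : δ^2*(W+e)*(W+f) = δ^2*(P*Q)*W := by
        rw [hedef, hfdef, hWdef]; ring
      calc b^2 * W ≤ (δ*W-e)*(δ*W-f) := by rw [← hid1]; exact h2'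
        _ ≤ δ^2*(W+e)*(W+f) := hcore
        _ = δ^2*(P*Q)*W := hid2
  exact le_of_mul_le_mul_right hfin hW

/-- If `Φ` satisfies RIP of order `|S| + |Λ|` with constant `δ`, `S` and `Λ` are
disjoint, `y = Φ_Λ x_Λ`, and `p` is the orthogonal projection of `y` onto the
column span of `Φ_S`, then `‖p‖₂ ≤ δ‖y‖₂`. -/
theorem norm_of_projection_upper_bound (m n : ℕ) (Φ : Matrix (Fin m) (Fin n) ℝ)
    (δ : ℝ) (hδ0 : 0 ≤ δ) (hδ1 : δ < 1)
    (S Λ : Finset (Fin n)) (hdisj : Disjoint S Λ)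
    (hRIP : ∀ z : Fin n → ℝ,
      (Finset.univ.filter fun j => z j ≠ 0).card ≤ S.card + Λ.card →
      (1 - δ) * (z ⬝ᵥ z) ≤ (Φ *ᵥ z) ⬝ᵥ (Φ *ᵥ z) ∧
        (Φ *ᵥ z) ⬝ᵥ (Φ *ᵥ z) ≤ (1 + δ) * (z ⬝ᵥ z))
    (x : Fin n → ℝ) (hxsupp : ∀ j, j ∉ Λ → x j = 0)
    (y : Fin m → ℝ) (hy : y = Φ *ᵥ x)
    -- `p` is the orthogonal projection of `y` onto the span of the columns of `Φ` indexed by `S`: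
    (p : Fin m → ℝ) (u : Fin n → ℝ) (husupp : ∀ j, j ∉ S → u j = 0)
    (hp : p = Φ *ᵥ u)
    (horth : ∀ j ∈ S, (fun i => Φ i j) ⬝ᵥ (y - p) = 0) :
    Real.sqrt (p ⬝ᵥ p) ≤ δ * Real.sqrt (y ⬝ᵥ y) := by
  set U : ℝ := u ⬝ᵥ u with hUdef
  set X : ℝ := x ⬝ᵥ x with hXdef
  set P : ℝ := (Φ *ᵥ u) ⬝ᵥ (Φ *ᵥ u) with hPdef
  set Q : ℝ := (Φ *ᵥ x) ⬝ᵥ (Φ *ᵥ x) with hQdef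
  set b : ℝ := (Φ *ᵥ u) ⬝ᵥ (Φ *ᵥ x) with hbdef
  -- disjoint supports
  have hux : u ⬝ᵥ x = 0 := by
    apply Finset.sum_eq_zero
    intro j _
    by_cases hj : j ∈ S
    · rw [hxsupp j (Finset.disjoint_left.mp hdisj hj), mul_zero]
    · rw [husupp j hj, zero_mul]
  -- the quadratic form inequalities
  have hquad : ∀ α β : ℝ,
      (1 - δ) * (α^2*U + β^2*X) ≤ α^2*P + 2*α*β*b + β^2*Q ∧
        α^2*P + 2*α*β*b + β^2*Q ≤ (1 + δ) * (α^2*U + β^2*X) := by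
    intro α β
    set z : Fin n → ℝ := α • u + β • x with hzdef
    have hcard : (Finset.univ.filter fun j => z j ≠ 0).card ≤ S.card + Λ.card := by
      refine le_trans (le_trans (Finset.card_le_card ?_) (Finset.card_union_le S Λ)) le_rfl
      intro j hj
      rw [Finset.mem_filter] at hj
      rw [Finset.mem_union]
      by_contra hc
      push_neg at hc
      apply hj.2
      rw [hzdef]
      simp [husupp j hc.1, hxsupp j hc.2]
    have hxu : x ⬝ᵥ u = 0 := by rw [dotProduct_comm]; exact hux
    have hz2 : z ⬝ᵥ z = α^2*U + β^2*X := by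
      rw [hzdef]
      simp only [add_dotProduct, dotProduct_add, smul_dotProduct, dotProduct_smul,
        smul_eq_mul, hux, hxu, ← hUdef, ← hXdef]
      ring
    have hc : (Φ *ᵥ x) ⬝ᵥ (Φ *ᵥ u) = b := by rw [hbdef, dotProduct_comm]
    have hΦz : (Φ *ᵥ z) ⬝ᵥ (Φ *ᵥ z) = α^2*P + 2*α*β*b + β^2*Q := by
      rw [hzdef, mulVec_add, mulVec_smul, mulVec_smul]
      simp only [add_dotProduct, dotProduct_add, smul_dotProduct, dotProduct_smul,
        smul_eq_mul, hc, ← hPdef, ← hQdef, ← hbdef]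
      ring
    have := hRIP z hcard
    rw [hz2, hΦz] at this
    exact this
  have hU0 : 0 ≤ U := Finset.sum_nonneg fun j _ => mul_self_nonneg _
  have hX0 : 0 ≤ X := Finset.sum_nonneg fun j _ => mul_self_nonneg _
  have hP1 : (1-δ)*U ≤ P := by have := (hquad 1 0).1; simpa using this
  have hP2 : P ≤ (1+δ)*U := by have := (hquad 1 0).2; simpa using this
  have hQ1 : (1-δ)*X ≤ Q := by have := (hquad 0 1).1; simpa using this
  have hQ2 : Q ≤ (1+δ)*X := by have := (hquad 0 1).2; simpa using this
  -- discriminant inequalities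
  have h1 : b^2 ≤ (P-(1-δ)*U)*(Q-(1-δ)*X) := by
    have hd : discrim (P-(1-δ)*U) (2*b) (Q-(1-δ)*X) ≤ 0 := by
      apply discrim_le_zero
      intro t
      have := (hquad t 1).1
      nlinarith [this]
    rw [discrim] at hd
    nlinarith [hd]
  have h2 : b^2 ≤ ((1+δ)*U-P)*((1+δ)*X-Q) := by
    have hd : discrim ((1+δ)*U-P) (-(2*b)) ((1+δ)*X-Q) ≤ 0 := by
      apply discrim_le_zero
      intro t
      have := (hquad t 1).2
      nlinarith [this]
    rw [discrim] at hd
    nlinarith [hd]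
  have hkey : b^2 ≤ δ^2*(P*Q) :=
    key_ineq δ U X P Q b hδ0 hδ1 hU0 hX0 h1 h2 hP1 hP2 hQ1 hQ2
  -- orthogonality: p ⬝ᵥ (y - p) = 0, hence b = P
  have hswap : p ⬝ᵥ (y - p) = ∑ j, u j * ((fun i => Φ i j) ⬝ᵥ (y - p)) := by
    rw [hp]
    simp only [dotProduct, mulVec, Pi.sub_apply]
    simp_rw [Finset.sum_mul, Finset.mul_sum]
    rw [Finset.sum_comm]
    exact Finset.sum_congr rfl fun j _ => Finset.sum_congr rfl fun i _ => by ring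
  have horth' : p ⬝ᵥ (y - p) = 0 := by
    rw [hswap]
    apply Finset.sum_eq_zero
    intro j _
    by_cases hj : j ∈ S
    · rw [horth j hj, mul_zero]
    · rw [husupp j hj, zero_mul]
  have hbP : b = P := by
    have h1 : p ⬝ᵥ y - p ⬝ᵥ p = 0 := by rw [← dotProduct_sub]; exact horth'
    have h2 : b = p ⬝ᵥ y := by rw [hbdef, hp, hy]
    have h3 : P = p ⬝ᵥ p := by rw [hPdef, hp]
    linarith
  -- conclude
  have hPp : p ⬝ᵥ p = P := by rw [hPdef, hp]
  have hQy : y ⬝ᵥ y = Q := by rw [hQdef, hy]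
  rw [hPp, hQy]
  have hP0 : 0 ≤ P := by rw [← hPp]; exact Finset.sum_nonneg fun i _ => mul_self_nonneg _
  have hQ0 : 0 ≤ Q := by rw [← hQy]; exact Finset.sum_nonneg fun i _ => mul_self_nonneg _
  rcases eq_or_lt_of_le hP0 with hP | hP
  · rw [← hP, Real.sqrt_zero]
    exact mul_nonneg hδ0 (Real.sqrt_nonneg _)
  · have hPle : P ≤ δ^2*Q := by
      rw [hbP] at hkey
      have : P * P ≤ (δ^2*Q) * P := by nlinarith [hkey]
      exact le_of_mul_le_mul_right this hP
    calc Real.sqrt P ≤ Real.sqrt (δ^2*Q) := Real.sqrt_le_sqrt hPle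
      _ = δ * Real.sqrt Q := by
          rw [Real.sqrt_mul (sq_nonneg δ), Real.sqrt_sq hδ0]
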